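/- Given a Chevalley–Eilenberg 1-cocycle α ∈ Z¹_CE(𝔤, Z(A)_{anti-Hermitian}), the maps a⁽ᵏ⁾ : T^k_ℂ(𝔤) → A defined inductively by a⁽⁰⁾ = 1_A and a⁽ᵏ⁾(ξ ⊗ Y) = α(ξ)·a⁽ᵏ⁻¹⁾(Y) + ξ ▷ a⁽ᵏ⁻¹⁾(Y) descend to a well-defined map a on the universal enveloping algebra U_ℂ(𝔤) (i.e., a vanishes on the two-sided ideal generated by ξ⊗η − η⊗ξ − [ξ,η]), and a belongs to U(U_ℂ(𝔤), A) with a|_𝔤 = α. Hence restriction a ↦ a|_𝔤 is a group isomorphism U(U_ℂ(𝔤), A) ≅ Z¹_CE(𝔤, Z(A)_{anti-Hermitian}). -/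

import Mathlib

open TensorProduct

noncomputable section

/-- The data of a Hopf `*`-algebra structure (over `ℂ`) on a `*`-algebra `H`,
together with a chosen Sweedler representation `rep` of the comultiplication:
`Δ(g) = Σᵢ g₍₁₎ᵢ ⊗ g₍₂₎ᵢ` where the pairs `(g₍₁₎ᵢ, g₍₂₎ᵢ)` are listed by `rep g`. -/
structure HopfStarData (H : Type) [Ring H] [Algebra ℂ H] [StarRing H] : Type where
  comul : H →ₗ[ℂ] H ⊗[ℂ] H
  counit : H →ₗ[ℂ] ℂ
  antipode : H →ₗ[ℂ] H
  rep : H → List (H × H)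
  rep_spec : ∀ g, comul g = ((rep g).map fun p => p.1 ⊗ₜ[ℂ] p.2).sum
  comul_one : comul 1 = 1
  comul_mul : ∀ g h, comul (g * h) = comul g * comul h
  counit_one : counit 1 = 1
  counit_mul : ∀ g h, counit (g * h) = counit g * counit h
  coassoc : (TensorProduct.assoc ℂ H H H).toLinearMap ∘ₗ
      (TensorProduct.map comul LinearMap.id) ∘ₗ comul
      = (TensorProduct.map LinearMap.id comul) ∘ₗ comul
  counit_comul_left : ∀ g, ((rep g).map fun p => counit p.1 • p.2).sum = g
  counit_comul_right : ∀ g, ((rep g).map fun p => counit p.2 • p.1).sum = g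
  antipode_left : ∀ g, ((rep g).map fun p => antipode p.1 * p.2).sum = counit g • (1 : H)
  antipode_right : ∀ g, ((rep g).map fun p => p.1 * antipode p.2).sum = counit g • (1 : H)
  comul_star : ∀ g, comul (star g) = ((rep g).map fun p => star p.1 ⊗ₜ[ℂ] star p.2).sum
  counit_star : ∀ g, counit (star g) = starRingEnd ℂ (counit g)
  antipode_star : ∀ g, antipode (star (antipode (star g))) = g

variable {H A : Type} [Ring H] [Algebra ℂ H] [StarRing H]

/-- `act` is a Hopf-algebraic `*`-action of `(H, D)` on the `*`-algebra `A`: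
`g ▷ (xy) = (g₍₁₎ ▷ x)(g₍₂₎ ▷ y)`, `g ▷ 1 = ε(g)1` and `(g ▷ x)* = S(g)* ▷ x*`. -/
def IsStarAction [Ring A] [Algebra ℂ A] [StarRing A]
    (D : HopfStarData H) (act : H →ₗ[ℂ] A →ₗ[ℂ] A) : Prop :=
  (∀ g h x, act (g * h) x = act g (act h x)) ∧
  (∀ x, act 1 x = x) ∧
  (∀ g x y, act g (x * y) = ((D.rep g).map fun p => act p.1 x * act p.2 y).sum) ∧
  (∀ g, act g 1 = D.counit g • 1) ∧
  (∀ g x, star (act g x) = act (star (D.antipode g)) (star x))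

/-- The convolution product on `Hom(H, A)`: `(a * b)(g) = a(g₍₁₎) b(g₍₂₎)`. -/
def conv [Ring A] [Algebra ℂ A] (D : HopfStarData H) (a b : H →ₗ[ℂ] A) : H →ₗ[ℂ] A :=
  LinearMap.mul' ℂ A ∘ₗ TensorProduct.map a b ∘ₗ D.comul

/-- The convolution unit `e(g) = ε(g) 1`. -/
def convUnit [Ring A] [Algebra ℂ A] (D : HopfStarData H) : H →ₗ[ℂ] A :=
  Algebra.linearMap ℂ A ∘ₗ D.counit

/-- Membership in `U(H, A)`: normalization, the cocycle condition, centrality and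
unitarity, cf. (13)–(16) in the paper. -/
def IsUElem [Ring A] [Algebra ℂ A] [StarRing A]
    (D : HopfStarData H) (act : H →ₗ[ℂ] A →ₗ[ℂ] A) (a : H →ₗ[ℂ] A) : Prop :=
  a 1 = 1 ∧
  (∀ g h, a (g * h) = ((D.rep g).map fun p => a p.1 * act p.2 (a h)).sum) ∧
  (∀ g b, ((D.rep g).map fun p => act p.1 b * a p.2).sum
        = ((D.rep g).map fun p => a p.1 * act p.2 b).sum) ∧
  (∀ g, ((D.rep g).map fun p => a p.1 * star (a (D.antipode (star p.2)))).sum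
      = D.counit g • 1)

/-- `c` is a central element of `A`. -/
def IsCentral [Ring A] (c : A) : Prop := ∀ x, c * x = x * c

/-- `c` is a unitary central element of `A`. -/
def IsUnitaryCentral [Ring A] [StarRing A] (c : A) : Prop :=
  IsCentral c ∧ star c * c = 1 ∧ c * star c = 1

/-- For a unitary central element `c`, the map `ĉ(g) = c · (g ▷ c⁻¹) = c · (g ▷ c*)`. -/
def chat [Ring A] [Algebra ℂ A] [StarRing A]
    (act : H →ₗ[ℂ] A →ₗ[ℂ] A) (c : A) : H →ₗ[ℂ] A :=
  LinearMap.mulLeft ℂ c ∘ₗ act.flip (star c)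

variable {𝔤 : Type} [LieRing 𝔤] [LieAlgebra ℝ 𝔤]

set_option linter.unusedSectionVars false
set_option maxHeartbeats 1000000
set_option synthInstance.maxHeartbeats 200000

section AuxHelpers

variable {M M' : Type} [AddCommGroup M] [Module ℂ M] [AddCommGroup M'] [Module ℂ M']
variable (D : HopfStarData H)

lemma aux_apply_comul (Φ : H ⊗[ℂ] H →ₗ[ℂ] M) (g : H) :
    Φ (D.comul g) = ((D.rep g).map fun p => Φ (p.1 ⊗ₜ[ℂ] p.2)).sum := by
  rw [D.rep_spec, map_list_sum Φ, List.map_map]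
  rfl

lemma aux_sum_eq_lift (f : H →ₗ[ℂ] H →ₗ[ℂ] M) (φ : H × H → M)
    (hφ : ∀ p : H × H, φ p = f p.1 p.2) (g : H) :
    ((D.rep g).map φ).sum = TensorProduct.lift f (D.comul g) := by
  rw [aux_apply_comul]
  exact congrArg List.sum (List.map_congr_left fun p _ => by simp [hφ])

lemma aux_lift_comul_one (f : H →ₗ[ℂ] H →ₗ[ℂ] M) :
    TensorProduct.lift f (D.comul 1) = f 1 1 := by
  rw [D.comul_one, Algebra.TensorProduct.one_def, TensorProduct.lift.tmul]

lemma aux_lift_tmul_one_mul (f : H →ₗ[ℂ] H →ₗ[ℂ] M) (k : H) (u : H ⊗[ℂ] H) :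
    TensorProduct.lift f ((k ⊗ₜ[ℂ] (1 : H)) * u)
      = TensorProduct.lift (f ∘ₗ LinearMap.mulLeft ℂ k) u := by
  induction u using TensorProduct.induction_on with
  | zero => simp
  | tmul x y => simp [Algebra.TensorProduct.tmul_mul_tmul]
  | add x y hx hy => rw [mul_add, map_add, map_add, hx, hy]

lemma aux_lift_one_tmul_mul (f : H →ₗ[ℂ] H →ₗ[ℂ] M) (k : H) (u : H ⊗[ℂ] H) :
    TensorProduct.lift f (((1 : H) ⊗ₜ[ℂ] k) * u)
      = TensorProduct.lift (f.compl₂ (LinearMap.mulLeft ℂ k)) u := by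
  induction u using TensorProduct.induction_on with
  | zero => simp
  | tmul x y => simp [Algebra.TensorProduct.tmul_mul_tmul]
  | add x y hx hy => rw [mul_add, map_add, map_add, hx, hy]

lemma aux_lift_prim_mul (f : H →ₗ[ℂ] H →ₗ[ℂ] M) (k h : H)
    (hk : D.comul k = k ⊗ₜ[ℂ] (1 : H) + (1 : H) ⊗ₜ[ℂ] k) :
    TensorProduct.lift f (D.comul (k * h))
      = TensorProduct.lift (f ∘ₗ LinearMap.mulLeft ℂ k) (D.comul h)
        + TensorProduct.lift (f.compl₂ (LinearMap.mulLeft ℂ k)) (D.comul h) := by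
  rw [D.comul_mul, hk, add_mul, map_add, aux_lift_tmul_one_mul, aux_lift_one_tmul_mul]

lemma aux_lift_congr {f g : H →ₗ[ℂ] H →ₗ[ℂ] M} (h : ∀ x y, f x y = g x y) (u : H ⊗[ℂ] H) :
    TensorProduct.lift f u = TensorProduct.lift g u := by
  rw [LinearMap.ext₂ h]

lemma aux_lift_add (f g : H →ₗ[ℂ] H →ₗ[ℂ] M) (u : H ⊗[ℂ] H) :
    TensorProduct.lift (f + g) u = TensorProduct.lift f u + TensorProduct.lift g u := by
  induction u using TensorProduct.induction_on with
  | zero => simp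
  | tmul x y => simp
  | add x y hx hy => rw [map_add, map_add, map_add, hx, hy]; abel

lemma aux_lift_post (f : H →ₗ[ℂ] H →ₗ[ℂ] M) (φ : M →ₗ[ℂ] M') (u : H ⊗[ℂ] H) :
    φ (TensorProduct.lift f u) = TensorProduct.lift (f.compr₂ φ) u := by
  induction u using TensorProduct.induction_on with
  | zero => simp
  | tmul x y => simp
  | add x y hx hy => rw [map_add, map_add, map_add, hx, hy]

lemma aux_ext {σ : Type} (ι : σ → H) (hgen : Algebra.adjoin ℂ (Set.range ι) = ⊤)
    (F G : H →ₗ[ℂ] M) (h1 : F 1 = G 1)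
    (hstep : ∀ (ξ : σ) (h : H), F h = G h → F (ι ξ * h) = G (ι ξ * h)) : F = G := by
  have key : ∀ g h : H, F h = G h → F (g * h) = G (g * h) := by
    intro g
    have hg : g ∈ Algebra.adjoin ℂ (Set.range ι) := by rw [hgen]; trivial
    induction hg using Algebra.adjoin_induction with
    | mem x hx =>
      obtain ⟨ξ, rfl⟩ := hx
      exact hstep ξ
    | algebraMap r =>
      intro h hh
      rw [← Algebra.smul_def, map_smul, map_smul, hh]
    | add x y hx hy ihx ihy =>
      intro h hh
      rw [add_mul, map_add, map_add, ihx h hh, ihy h hh]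
    | mul x y hx hy ihx ihy =>
      intro h hh
      rw [mul_assoc]
      exact ihx _ (ihy h hh)
  ext g
  simpa using key g 1 h1

lemma aux_coassoc (t : H →ₗ[ℂ] H →ₗ[ℂ] H →ₗ[ℂ] M) (g : H) :
    ((D.rep g).map fun p => (((D.rep p.1).map fun q => t q.1 q.2 p.2).sum)).sum
    = ((D.rep g).map fun p => (((D.rep p.2).map fun q => t p.1 q.1 q.2).sum)).sum := by
  have hc := LinearMap.congr_fun D.coassoc g
  set Φ : H ⊗[ℂ] (H ⊗[ℂ] H) →ₗ[ℂ] M :=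
    TensorProduct.lift ((TensorProduct.lift.equiv (RingHom.id ℂ) H H M).toLinearMap ∘ₗ t) with hΦ
  have hΦt : ∀ (x : H) (u : H ⊗[ℂ] H), Φ (x ⊗ₜ[ℂ] u) = TensorProduct.lift (t x) u := by
    intro x u
    induction u using TensorProduct.induction_on with
    | zero => simp
    | tmul a b =>
      rw [hΦ, TensorProduct.lift.tmul]
      simp [TensorProduct.lift.equiv_apply]
    | add a b ha hb => rw [TensorProduct.tmul_add, map_add, map_add, ha, hb]
  set K : H ⊗[ℂ] H →ₗ[ℂ] M :=
    Φ ∘ₗ (TensorProduct.assoc ℂ H H H).toLinearMap ∘ₗ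
      (TensorProduct.map D.comul LinearMap.id) with hKdef
  set L : H ⊗[ℂ] H →ₗ[ℂ] M :=
    Φ ∘ₗ (TensorProduct.map LinearMap.id D.comul) with hLdef
  have hKL : K (D.comul g) = L (D.comul g) := by
    simpa only [hKdef, hLdef, LinearMap.comp_apply, LinearEquiv.coe_coe] using congrArg Φ hc
  have hK : ∀ x y : H, K (x ⊗ₜ[ℂ] y)
      = TensorProduct.lift (t.compr₂ (LinearMap.applyₗ y)) (D.comul x) := by
    intro x y
    have key : ∀ u : H ⊗[ℂ] H,
        Φ ((TensorProduct.assoc ℂ H H H) (u ⊗ₜ[ℂ] y))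
          = TensorProduct.lift (t.compr₂ (LinearMap.applyₗ y)) u := by
      intro u
      induction u using TensorProduct.induction_on with
      | zero => simp
      | tmul a b =>
        rw [TensorProduct.assoc_tmul, hΦt, TensorProduct.lift.tmul, TensorProduct.lift.tmul]
        rfl
      | add a b ha hb =>
        rw [TensorProduct.add_tmul, map_add, map_add, map_add, ha, hb]
    simp only [hKdef, LinearMap.comp_apply, TensorProduct.map_tmul, LinearMap.id_apply,
      LinearEquiv.coe_coe]
    exact key (D.comul x)
  have hL : ∀ x y : H, L (x ⊗ₜ[ℂ] y) = TensorProduct.lift (t x) (D.comul y) := by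
    intro x y
    simp only [hLdef, LinearMap.comp_apply, TensorProduct.map_tmul, LinearMap.id_apply, hΦt]
  calc ((D.rep g).map fun p => (((D.rep p.1).map fun q => t q.1 q.2 p.2).sum)).sum
      = ((D.rep g).map fun p => K (p.1 ⊗ₜ[ℂ] p.2)).sum := by
        refine congrArg List.sum (List.map_congr_left fun p _ => ?_)
        rw [hK]
        exact aux_sum_eq_lift D (t.compr₂ (LinearMap.applyₗ p.2)) _ (fun q => rfl) p.1
    _ = K (D.comul g) := (aux_apply_comul D K g).symm
    _ = L (D.comul g) := hKL
    _ = ((D.rep g).map fun p => L (p.1 ⊗ₜ[ℂ] p.2)).sum := aux_apply_comul D L g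
    _ = ((D.rep g).map fun p => (((D.rep p.2).map fun q => t p.1 q.1 q.2).sum)).sum := by
        refine congrArg List.sum (List.map_congr_left fun p _ => ?_)
        rw [hL]
        exact (aux_sum_eq_lift D (t p.1) _ (fun q => rfl) p.2).symm

end AuxHelpers
section AuxMain

variable (D : HopfStarData H)

lemma aux_S_one : D.antipode 1 = 1 := by
  have h := D.antipode_left 1
  rw [aux_sum_eq_lift D ((LinearMap.mul ℂ H).compl₁₂ D.antipode LinearMap.id)
    (fun p => D.antipode p.1 * p.2) (fun p => rfl) 1, aux_lift_comul_one, D.counit_one] at h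
  simpa using h

lemma aux_lift_sub {M : Type} [AddCommGroup M] [Module ℂ M]
    (f g : H →ₗ[ℂ] H →ₗ[ℂ] M) (u : H ⊗[ℂ] H) :
    TensorProduct.lift (f - g) u = TensorProduct.lift f u - TensorProduct.lift g u := by
  induction u using TensorProduct.induction_on with
  | zero => simp
  | tmul x y => simp
  | add x y hx hy => rw [map_add, map_add, map_add, hx, hy]; abel

variable {𝔤' : Type} [LieRing 𝔤'] [LieAlgebra ℝ 𝔤']

lemma aux_S_theory (ι : 𝔤' → H)
    (hadd : ∀ ξ η, ι (ξ + η) = ι ξ + ι η)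
    (hsmul : ∀ (r : ℝ) ξ, ι (r • ξ) = (r : ℂ) • ι ξ)
    (hbr : ∀ ξ η, ι ⁅ξ, η⁆ = ι ξ * ι η - ι η * ι ξ)
    (hprim : ∀ ξ, D.comul (ι ξ) = ι ξ ⊗ₜ[ℂ] 1 + 1 ⊗ₜ[ℂ] ι ξ)
    (hS : ∀ ξ, D.antipode (ι ξ) = - ι ξ)
    (hcounit : ∀ ξ, D.counit (ι ξ) = 0)
    (hgen : Algebra.adjoin ℂ (Set.range ι) = ⊤)
    (huniv : ∀ (B : Type) [Ring B] [Algebra ℂ B] (f : 𝔤' → B),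
      (∀ ξ η, f (ξ + η) = f ξ + f η) →
      (∀ (r : ℝ) ξ, f (r • ξ) = (r : ℂ) • f ξ) →
      (∀ ξ η, f ⁅ξ, η⁆ = f ξ * f η - f η * f ξ) →
      ∃! φ : H →ₐ[ℂ] B, ∀ ξ, φ (ι ξ) = f ξ) :
    ∀ u v : H, D.antipode (u * v) = D.antipode v * D.antipode u := by
  obtain ⟨Sop, hSop, -⟩ := huniv (Hᵐᵒᵖ) (fun ξ => MulOpposite.op (- ι ξ))
    (by intro ξ η; rw [hadd]; simp; abel)
    (by intro r ξ; rw [hsmul]; simp)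
    (by
      intro ξ η
      have e1 : MulOpposite.op (-ι ξ) * MulOpposite.op (-ι η)
          = MulOpposite.op (ι η * ι ξ) := by
        rw [← MulOpposite.op_mul, neg_mul_neg]
      have e2 : MulOpposite.op (-ι η) * MulOpposite.op (-ι ξ)
          = MulOpposite.op (ι ξ * ι η) := by
        rw [← MulOpposite.op_mul, neg_mul_neg]
      rw [hbr, e1, e2, neg_sub, ← MulOpposite.op_sub])
  set Sv : H →ₗ[ℂ] H :=
    (MulOpposite.opLinearEquiv ℂ (M := H)).symm.toLinearMap ∘ₗ Sop.toLinearMap with hSvdef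
  have hSv : ∀ g, Sv g = MulOpposite.unop (Sop g) := fun g => rfl
  have hSv1 : Sv 1 = 1 := by rw [hSv, map_one]; rfl
  have hSvι : ∀ ξ, Sv (ι ξ) = - ι ξ := by
    intro ξ
    rw [hSv, hSop ξ]
    rfl
  have hSvmul : ∀ u v, Sv (u * v) = Sv v * Sv u := by
    intro u v
    rw [hSv, hSv, hSv, map_mul]
    rfl
  -- id ⋆ Sv = ε
  have hR : ∀ g : H, ((D.rep g).map fun q => q.1 * Sv q.2).sum = D.counit g • 1 := by
    have key : (TensorProduct.lift ((LinearMap.mul ℂ H).compl₁₂ LinearMap.id Sv) ∘ₗ D.comul)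
        = (LinearMap.toSpanSingleton ℂ H 1 ∘ₗ D.counit) := by
      refine aux_ext ι hgen _ _ ?_ ?_
      · simp only [LinearMap.comp_apply, aux_lift_comul_one, LinearMap.compl₁₂_apply,
          LinearMap.id_apply, LinearMap.mul_apply', hSv1, mul_one, D.counit_one,
          LinearMap.toSpanSingleton_apply, one_smul]
      · intro ξ h ih
        simp only [LinearMap.comp_apply, LinearMap.toSpanSingleton_apply] at ih ⊢
        set f := (LinearMap.mul ℂ H).compl₁₂ LinearMap.id Sv with hf
        rw [aux_lift_prim_mul D f _ _ (hprim ξ), ← aux_lift_add,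
          aux_lift_congr (g := f.compr₂ (LinearMap.mulLeft ℂ (ι ξ))
            - f.compr₂ (LinearMap.mulRight ℂ (ι ξ)))
            (by
              intro x y
              simp only [hf, LinearMap.add_apply, LinearMap.comp_apply,
                LinearMap.compl₂_apply, LinearMap.compl₁₂_apply, LinearMap.sub_apply,
                LinearMap.compr₂_apply, LinearMap.mulLeft_apply, LinearMap.mulRight_apply,
                LinearMap.mul_apply', LinearMap.id_apply, hSvmul, hSvι]
              rw [mul_neg, mul_neg, ← mul_assoc x (Sv y) (ι ξ), mul_assoc (ι ξ) x (Sv y),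
                sub_eq_add_neg]),
          aux_lift_sub, ← aux_lift_post, ← aux_lift_post, ih]
        rw [D.counit_mul, hcounit ξ, zero_mul, zero_smul]
        simp only [LinearMap.mulLeft_apply, LinearMap.mulRight_apply]
        rw [mul_smul_comm, smul_mul_assoc, mul_one, one_mul, sub_self]
    intro g
    have h2 := LinearMap.congr_fun key g
    simp only [LinearMap.comp_apply, LinearMap.toSpanSingleton_apply] at h2
    rw [aux_sum_eq_lift D ((LinearMap.mul ℂ H).compl₁₂ LinearMap.id Sv)
      (fun q => q.1 * Sv q.2) (fun q => rfl) g, h2]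
  -- S = Sv via coassociativity
  have hSSv : ∀ g, D.antipode g = Sv g := by
    intro g
    set t : H →ₗ[ℂ] H →ₗ[ℂ] H →ₗ[ℂ] H :=
      { toFun := fun x => (LinearMap.mul ℂ H).compl₁₂ (LinearMap.mulLeft ℂ (D.antipode x)) Sv
        map_add' := by
          intro x y
          ext u v
          simp [add_mul]
        map_smul' := by
          intro c x
          ext u v
          simp [smul_mul_assoc] } with ht
    have hco := aux_coassoc D t g
    have htapp : ∀ x u v : H, t x u v = D.antipode x * u * Sv v := fun x u v => rfl
    have hLHS : ((D.rep g).map fun p =>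
        (((D.rep p.1).map fun q => t q.1 q.2 p.2).sum)).sum = Sv g := by
      calc ((D.rep g).map fun p => (((D.rep p.1).map fun q => t q.1 q.2 p.2).sum)).sum
          = ((D.rep g).map fun p => D.counit p.1 • Sv p.2).sum := by
            refine congrArg List.sum (List.map_congr_left fun p _ => ?_)
            rw [show ((D.rep p.1).map fun q => t q.1 q.2 p.2)
                = ((D.rep p.1).map fun q => (D.antipode q.1 * q.2) * Sv p.2) from
              List.map_congr_left fun q _ => rfl]
            rw [List.sum_map_mul_right, D.antipode_left, smul_mul_assoc, one_mul]
        _ = Sv (((D.rep g).map fun p => D.counit p.1 • p.2).sum) := by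
            rw [map_list_sum Sv, List.map_map]
            exact congrArg List.sum (List.map_congr_left fun p _ => by simp)
        _ = Sv g := by rw [D.counit_comul_left]
    have hRHS : ((D.rep g).map fun p =>
        (((D.rep p.2).map fun q => t p.1 q.1 q.2).sum)).sum = D.antipode g := by
      calc ((D.rep g).map fun p => (((D.rep p.2).map fun q => t p.1 q.1 q.2).sum)).sum
          = ((D.rep g).map fun p => D.counit p.2 • D.antipode p.1).sum := by
            refine congrArg List.sum (List.map_congr_left fun p _ => ?_)
            rw [show ((D.rep p.2).map fun q => t p.1 q.1 q.2)
                = ((D.rep p.2).map fun q => D.antipode p.1 * (q.1 * Sv q.2)) from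
              List.map_congr_left fun q _ => by rw [htapp, mul_assoc]]
            rw [List.sum_map_mul_left, hR p.2, mul_smul_comm, mul_one]
        _ = D.antipode (((D.rep g).map fun p => D.counit p.2 • p.1).sum) := by
            rw [map_list_sum D.antipode, List.map_map]
            exact congrArg List.sum (List.map_congr_left fun p _ => by simp)
        _ = D.antipode g := by rw [D.counit_comul_right]
    rw [← hLHS, hco, hRHS]
  intro u v
  rw [hSSv, hSSv, hSSv, hSvmul]

end AuxMain
section AuxKey

variable {𝔤' : Type} [LieRing 𝔤'] [LieAlgebra ℝ 𝔤']
variable (D : HopfStarData H)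

lemma aux_sc_central (c : ℂ) (x : H) :
    star (c • (1:H)) * x = x * star (c • (1:H)) := by
  have h1 : star (c • star x) = x * star (c • (1:H)) := by
    rw [show c • star x = (c • (1:H)) * star x by rw [smul_mul_assoc, one_mul], star_mul,
      star_star]
  have h2 : star (c • star x) = star (c • (1:H)) * x := by
    rw [show c • star x = star x * (c • (1:H)) by rw [mul_smul_comm, mul_one], star_mul,
      star_star]
  rw [← h2, h1]

lemma aux_SS (ι : 𝔤' → H) (hgen : Algebra.adjoin ℂ (Set.range ι) = ⊤)
    (hS : ∀ ξ, D.antipode (ι ξ) = - ι ξ)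
    (hanti : ∀ u v, D.antipode (u * v) = D.antipode v * D.antipode u) :
    ∀ g, D.antipode (D.antipode g) = g := by
  intro g
  refine LinearMap.congr_fun (aux_ext ι hgen (D.antipode ∘ₗ D.antipode) LinearMap.id ?_ ?_) g
  · simp [aux_S_one D]
  · intro ξ h ih
    simp only [LinearMap.comp_apply, LinearMap.id_apply] at ih ⊢
    rw [hanti, hS, mul_neg, map_neg, hanti, hS, neg_mul, neg_neg, ih]

lemma aux_S_sc (hSS : ∀ g, D.antipode (D.antipode g) = g) (c : ℂ) :
    D.antipode (star (c • (1:H))) = star (c • (1:H)) := by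
  have h := D.antipode_star (c • (1:H))
  have hS1' : D.antipode (c • (1:H)) = c • (1:H) := by rw [map_smul, aux_S_one D]
  have h3 := hSS (star (D.antipode (star (c • (1:H)))))
  rw [h, hS1'] at h3
  calc D.antipode (star (c • (1:H)))
      = star (star (D.antipode (star (c • (1:H))))) := (star_star _).symm
    _ = star (c • (1:H)) := by rw [← h3]

lemma aux_KEY (hanti : ∀ u v, D.antipode (u * v) = D.antipode v * D.antipode u)
    (hSsc : ∀ c : ℂ, D.antipode (star (c • (1:H))) = star (c • (1:H))) (c : ℂ) :
    star (c • (1:H)) = (starRingEnd ℂ c) • (1:H) := by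
  set F : H →+ H →+ H :=
    { toFun := fun u => (AddMonoidHom.mulLeft (D.antipode (star u))).comp
        (starAddEquiv : H ≃+ H).toAddMonoidHom
      map_zero' := by ext v; simp
      map_add' := by intro x y; ext v; simp [star_add, add_mul] } with hF
  have hFapp : ∀ u v, F u v = D.antipode (star u) * star v := fun u v => rfl
  have hbal : ∀ (c' : ℂ) (m n : H), F (c' • m) n = F m (c' • n) := by
    intro c' m n
    rw [hFapp, hFapp]
    have e1 : star (c' • m) = star m * star (c' • (1:H)) := by
      rw [show c' • m = (c' • (1:H)) * m by rw [smul_mul_assoc, one_mul], star_mul]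
    have e2 : star (c' • n) = star n * star (c' • (1:H)) := by
      rw [show c' • n = (c' • (1:H)) * n by rw [smul_mul_assoc, one_mul], star_mul]
    rw [e1, e2, hanti, hSsc, aux_sc_central c' (D.antipode (star m)), mul_assoc,
      aux_sc_central c' (star n)]
  have hA2 := D.comul_star (star (c • (1:H)))
  rw [star_star, map_smul, D.comul_one, Algebra.TensorProduct.one_def] at hA2
  have happ := congrArg (TensorProduct.liftAddHom F hbal) hA2
  rw [TensorProduct.smul_tmul', TensorProduct.liftAddHom_tmul,
    map_list_sum (TensorProduct.liftAddHom F hbal), List.map_map] at happ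
  have eR : (List.map ((TensorProduct.liftAddHom F hbal) ∘ fun q => star q.1 ⊗ₜ[ℂ] star q.2)
      (D.rep (star (c • (1:H))))).sum
      = ((D.rep (star (c • (1:H)))).map fun q => D.antipode q.1 * q.2).sum := by
    refine congrArg List.sum (List.map_congr_left fun q _ => ?_)
    simp only [Function.comp_apply, TensorProduct.liftAddHom_tmul, hFapp, star_star]
  rw [eR, D.antipode_left, hFapp, hSsc, star_one, mul_one, D.counit_star] at happ
  have hc1 : D.counit (c • (1:H)) = c := by
    rw [map_smul, D.counit_one, smul_eq_mul, mul_one]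
  rw [hc1] at happ
  exact happ

lemma aux_star_smul (hKEY : ∀ c : ℂ, star (c • (1:H)) = (starRingEnd ℂ c) • (1:H))
    (c : ℂ) (x : H) : star (c • x) = (starRingEnd ℂ c) • star x := by
  rw [show c • x = (c • (1:H)) * x by rw [smul_mul_assoc, one_mul], star_mul, hKEY,
    mul_smul_comm, mul_one]

end AuxKey

/-- for `H = U_ℂ(𝔤)` (characterized by its universal property and
generated by the primitive elements `ι ξ`), every Chevalley–Eilenberg one-cocycle
`α ∈ Z¹_CE(𝔤, Z(A)_{anti-Herm})` arises as `a|_𝔤` for a (unique) `a ∈ U(U_ℂ(𝔤), A)`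
(the inductively defined extension on tensor powers descends to `U_ℂ(𝔤)`); hence
restriction `a ↦ a|_𝔤` is a group isomorphism
`U(U_ℂ(𝔤), A) ≅ Z¹_CE(𝔤, Z(A)_{anti-Herm})`. -/
theorem restriction_is_isomorphism
    [Ring A] [Algebra ℂ A] [StarRing A]
    (D : HopfStarData H) (act : H →ₗ[ℂ] A →ₗ[ℂ] A) (hact : IsStarAction D act)
    (ι : 𝔤 → H)
    (hadd : ∀ ξ η, ι (ξ + η) = ι ξ + ι η)
    (hsmul : ∀ (r : ℝ) ξ, ι (r • ξ) = (r : ℂ) • ι ξ)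
    (hbr : ∀ ξ η, ι ⁅ξ, η⁆ = ι ξ * ι η - ι η * ι ξ)
    (hprim : ∀ ξ, D.comul (ι ξ) = ι ξ ⊗ₜ[ℂ] 1 + 1 ⊗ₜ[ℂ] ι ξ)
    (hstar : ∀ ξ, star (ι ξ) = - ι ξ)
    (hS : ∀ ξ, D.antipode (ι ξ) = - ι ξ)
    (hcounit : ∀ ξ, D.counit (ι ξ) = 0)
    (hgen : Algebra.adjoin ℂ (Set.range ι) = ⊤)
    (huniv : ∀ (B : Type) [Ring B] [Algebra ℂ B] (f : 𝔤 → B),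
      (∀ ξ η, f (ξ + η) = f ξ + f η) →
      (∀ (r : ℝ) ξ, f (r • ξ) = (r : ℂ) • f ξ) →
      (∀ ξ η, f ⁅ξ, η⁆ = f ξ * f η - f η * f ξ) →
      ∃! φ : H →ₐ[ℂ] B, ∀ ξ, φ (ι ξ) = f ξ) :
    (∀ α : 𝔤 → A,
      (∀ ξ η, α (ξ + η) = α ξ + α η) →
      (∀ (r : ℝ) ξ, α (r • ξ) = (r : ℂ) • α ξ) →
      (∀ ξ, IsCentral (α ξ) ∧ star (α ξ) = - α ξ) →
      (∀ ξ η, α ⁅ξ, η⁆ = act (ι ξ) (α η) - act (ι η) (α ξ)) →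
      ∃ a, IsUElem D act a ∧ ∀ ξ, a (ι ξ) = α ξ) ∧
    (∀ a b, IsUElem D act a → IsUElem D act b →
      ∀ ξ, conv D a b (ι ξ) = a (ι ξ) + b (ι ξ)) ∧
    (∀ a b, IsUElem D act a → IsUElem D act b →
      (∀ ξ, a (ι ξ) = b (ι ξ)) → a = b) := by

  obtain ⟨hact1, hact2, hact3, hact4, hact5⟩ := hact
  have hder : ∀ ξ (x y : A), act (ι ξ) (x * y) = act (ι ξ) x * y + x * act (ι ξ) y := by
    intro ξ x y
    have h3 := hact3 (ι ξ) x y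
    rw [aux_sum_eq_lift D ((LinearMap.mul ℂ A).compl₁₂ (act.flip x) (act.flip y))
      (fun p => act p.1 x * act p.2 y) (fun p => rfl) (ι ξ), hprim ξ, map_add,
      TensorProduct.lift.tmul, TensorProduct.lift.tmul] at h3
    simpa [hact2] using h3
  have hact_one : ∀ ξ, act (ι ξ) (1:A) = 0 := by
    intro ξ
    rw [hact4, hcounit, zero_smul]
  have cocprim : ∀ (a : H →ₗ[ℂ] A), IsUElem D act a →
      ∀ ξ h, a (ι ξ * h) = a (ι ξ) * a h + act (ι ξ) (a h) := by
    intro a ha ξ h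
    have h2 := ha.2.1 (ι ξ) h
    rw [aux_sum_eq_lift D ((LinearMap.mul ℂ A).compl₁₂ a (act.flip (a h)))
      (fun p => a p.1 * act p.2 (a h)) (fun p => rfl) (ι ξ), hprim ξ, map_add,
      TensorProduct.lift.tmul, TensorProduct.lift.tmul] at h2
    simpa [hact2, ha.1] using h2
  refine ⟨?_, ?_, ?_⟩
  · -- PART 1 : existence
    intro α hα1 hα2 hα3 hα4
    have hanti := aux_S_theory D ι hadd hsmul hbr hprim hS hcounit hgen huniv
    have hSS := aux_SS D ι hgen hS hanti
    have hKEY := aux_KEY D hanti (aux_S_sc D hSS)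
    have hstsm := aux_star_smul hKEY
    have hAstar : ∀ (c : ℂ) (x : A), star (c • x) = (starRingEnd ℂ c) • star x := by
      intro c x
      have hax : act (c • (1:H)) x = c • x := by
        rw [map_smul]
        simp [hact2]
      have hS1' : D.antipode (c • (1:H)) = c • (1:H) := by rw [map_smul, aux_S_one D]
      have h5 := hact5 (c • (1:H)) x
      rw [hax, hS1', hKEY, map_smul] at h5
      simpa [hact2] using h5
    set f : 𝔤 → Module.End ℂ A := fun ξ => LinearMap.mulLeft ℂ (α ξ) + act (ι ξ) with hfdef
    have hfapp : ∀ ξ (x : A), f ξ x = α ξ * x + act (ι ξ) x := fun ξ x => rfl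
    have hf1 : ∀ ξ η, f (ξ + η) = f ξ + f η := by
      intro ξ η
      ext x
      simp only [LinearMap.add_apply, hfapp]
      rw [hα1, hadd, map_add]
      simp only [LinearMap.add_apply]
      rw [add_mul]
      abel
    have hf2 : ∀ (r : ℝ) ξ, f (r • ξ) = (r:ℂ) • f ξ := by
      intro r ξ
      ext x
      simp only [LinearMap.smul_apply, hfapp]
      rw [hα2, hsmul, map_smul]
      simp only [LinearMap.smul_apply]
      rw [smul_mul_assoc, smul_add]
    have hf3 : ∀ ξ η, f ⁅ξ, η⁆ = f ξ * f η - f η * f ξ := by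
      intro ξ η
      ext x
      simp only [LinearMap.sub_apply, Module.End.mul_apply, hfapp]
      rw [hα4, hbr, map_sub]
      simp only [LinearMap.sub_apply]
      rw [hact1, hact1, map_add, map_add, hder, hder, sub_mul]
      have hc : α ξ * (α η * x) = α η * (α ξ * x) := by
        rw [← mul_assoc, (hα3 ξ).1 (α η), mul_assoc]
      rw [mul_add, mul_add, hc]
      abel
    obtain ⟨T, hT, -⟩ := huniv (Module.End ℂ A) f hf1 hf2 hf3
    set a : H →ₗ[ℂ] A :=
      { toFun := fun g => T g 1
        map_add' := by intro x y; show T (x + y) 1 = T x 1 + T y 1; rw [map_add]; rfl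
        map_smul' := by
          intro c x; show T (c • x) 1 = c • T x 1; rw [map_smul]; rfl } with hadef
    have haapp : ∀ g, a g = T g 1 := fun g => rfl
    have ha1 : a 1 = 1 := by rw [haapp, map_one T]; rfl
    have haT : ∀ g h, a (g * h) = T g (a h) := by
      intro g h
      rw [haapp, haapp, map_mul T g h]
      rfl
    have haprim : ∀ ξ (h : H), a (ι ξ * h) = α ξ * a h + act (ι ξ) (a h) := by
      intro ξ h
      rw [haT, hT ξ]
      rfl
    have haι : ∀ ξ, a (ι ξ) = α ξ := by
      intro ξ
      have h2 := haprim ξ 1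
      rw [mul_one, ha1, mul_one, hact_one, add_zero] at h2
      exact h2
    -- the key identity  T g x = Σ a(g₍₁₎) (g₍₂₎ ▷ x)
    have hKI : ∀ (x : A) (g : H),
        T g x = TensorProduct.lift ((LinearMap.mul ℂ A).compl₁₂ a (act.flip x)) (D.comul g) := by
      intro x
      set G := (LinearMap.mul ℂ A).compl₁₂ a (act.flip x) with hGdef
      set Fx : H →ₗ[ℂ] A :=
        { toFun := fun g => T g x
          map_add' := by intro u v; show T (u + v) x = T u x + T v x; rw [map_add]; rfl
          map_smul' := by
            intro c u; show T (c • u) x = c • T u x; rw [map_smul]; rfl } with hFx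
      have key := aux_ext ι hgen Fx (TensorProduct.lift G ∘ₗ D.comul) ?_ ?_
      · intro g
        exact LinearMap.congr_fun key g
      · show T 1 x = _
        simp only [LinearMap.comp_apply, aux_lift_comul_one, hGdef, LinearMap.compl₁₂_apply,
          LinearMap.mul_apply', LinearMap.flip_apply]
        rw [map_one, ha1, hact2, one_mul]
        rfl
      · intro ξ h ih
        have ihe : T h x = TensorProduct.lift G (D.comul h) := by
          exact ih
        show T (ι ξ * h) x = _
        simp only [LinearMap.comp_apply]
        have hptw : ∀ u v : H,
            (G ∘ₗ LinearMap.mulLeft ℂ (ι ξ) + G.compl₂ (LinearMap.mulLeft ℂ (ι ξ))) u v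
            = (G.compr₂ (LinearMap.mulLeft ℂ (α ξ)) + G.compr₂ (act (ι ξ))) u v := by
          intro u v
          simp only [LinearMap.add_apply, LinearMap.comp_apply, LinearMap.compl₂_apply,
            LinearMap.compl₁₂_apply, LinearMap.compr₂_apply, LinearMap.mulLeft_apply,
            LinearMap.mul_apply', LinearMap.flip_apply, hGdef]
          rw [haprim, hact1, hder, add_mul, mul_assoc (α ξ)]
          abel
        have e1 : T (ι ξ * h) x = α ξ * T h x + act (ι ξ) (T h x) := by
          rw [map_mul T (ι ξ) h, Module.End.mul_apply, hT ξ]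
          rfl
        have e2 : TensorProduct.lift G (D.comul (ι ξ * h))
            = α ξ * TensorProduct.lift G (D.comul h)
              + act (ι ξ) (TensorProduct.lift G (D.comul h)) := by
          rw [aux_lift_prim_mul D G _ _ (hprim ξ), ← aux_lift_add,
            aux_lift_congr hptw (D.comul h), aux_lift_add, ← aux_lift_post, ← aux_lift_post]
          rfl
        rw [e1, e2, ihe]
    have cond2 : ∀ g h, a (g * h) = ((D.rep g).map fun p => a p.1 * act p.2 (a h)).sum := by
      intro g h
      rw [haT, hKI (a h) g]
      exact (aux_sum_eq_lift D _ (fun p => a p.1 * act p.2 (a h)) (fun p => rfl) g).symm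
    have cond3 : ∀ (g : H) (x : A), ((D.rep g).map fun p => act p.1 x * a p.2).sum
        = ((D.rep g).map fun p => a p.1 * act p.2 x).sum := by
      intro g x
      set f3 := (LinearMap.mul ℂ A).compl₁₂ (act.flip x) a with hf3def
      set g3 := (LinearMap.mul ℂ A).compl₁₂ a (act.flip x) with hg3def
      have key : (TensorProduct.lift f3 ∘ₗ D.comul) = (TensorProduct.lift g3 ∘ₗ D.comul) := by
        refine aux_ext ι hgen _ _ ?_ ?_
        · simp only [LinearMap.comp_apply, aux_lift_comul_one, hf3def, hg3def,
            LinearMap.compl₁₂_apply, LinearMap.mul_apply', LinearMap.flip_apply]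
          rw [hact2, ha1, mul_one, one_mul]
        · intro ξ h ih
          simp only [LinearMap.comp_apply] at ih ⊢
          have hptwf : ∀ u v : H,
              (f3 ∘ₗ LinearMap.mulLeft ℂ (ι ξ) + f3.compl₂ (LinearMap.mulLeft ℂ (ι ξ))) u v
              = (f3.compr₂ (LinearMap.mulLeft ℂ (α ξ)) + f3.compr₂ (act (ι ξ))) u v := by
            intro u v
            simp only [LinearMap.add_apply, LinearMap.comp_apply, LinearMap.compl₂_apply,
              LinearMap.compl₁₂_apply, LinearMap.compr₂_apply, LinearMap.mulLeft_apply,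
              LinearMap.mul_apply', LinearMap.flip_apply, hf3def]
            rw [haprim, hact1, hder, mul_add, ← mul_assoc (act u x) (α ξ) (a v),
              ← (hα3 ξ).1 (act u x), mul_assoc (α ξ)]
            abel
          have hptwg : ∀ u v : H,
              (g3 ∘ₗ LinearMap.mulLeft ℂ (ι ξ) + g3.compl₂ (LinearMap.mulLeft ℂ (ι ξ))) u v
              = (g3.compr₂ (LinearMap.mulLeft ℂ (α ξ)) + g3.compr₂ (act (ι ξ))) u v := by
            intro u v
            simp only [LinearMap.add_apply, LinearMap.comp_apply, LinearMap.compl₂_apply,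
              LinearMap.compl₁₂_apply, LinearMap.compr₂_apply, LinearMap.mulLeft_apply,
              LinearMap.mul_apply', LinearMap.flip_apply, hg3def]
            rw [haprim, hact1, hder, add_mul, mul_assoc (α ξ)]
            abel
          have e1 : TensorProduct.lift f3 (D.comul (ι ξ * h))
              = α ξ * TensorProduct.lift f3 (D.comul h)
                + act (ι ξ) (TensorProduct.lift f3 (D.comul h)) := by
            rw [aux_lift_prim_mul D f3 _ _ (hprim ξ), ← aux_lift_add,
              aux_lift_congr hptwf (D.comul h), aux_lift_add, ← aux_lift_post, ← aux_lift_post]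
            rfl
          have e2 : TensorProduct.lift g3 (D.comul (ι ξ * h))
              = α ξ * TensorProduct.lift g3 (D.comul h)
                + act (ι ξ) (TensorProduct.lift g3 (D.comul h)) := by
            rw [aux_lift_prim_mul D g3 _ _ (hprim ξ), ← aux_lift_add,
              aux_lift_congr hptwg (D.comul h), aux_lift_add, ← aux_lift_post, ← aux_lift_post]
            rfl
          rw [e1, e2, ih]
      have h2 := LinearMap.congr_fun key g
      simp only [LinearMap.comp_apply] at h2
      rw [aux_sum_eq_lift D f3 (fun p => act p.1 x * a p.2) (fun p => rfl) g,
        aux_sum_eq_lift D g3 (fun p => a p.1 * act p.2 x) (fun p => rfl) g]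
      exact h2
    have hbsmul : ∀ (c : ℂ) (v : H),
        star (a (D.antipode (star (c • v)))) = c • star (a (D.antipode (star v))) := by
      intro c v
      rw [hstsm, map_smul, map_smul, hAstar]
      simp [Complex.conj_conj]
    set blin : H →ₗ[ℂ] A :=
      { toFun := fun v => star (a (D.antipode (star v)))
        map_add' := by
          intro x y
          show star (a (D.antipode (star (x + y)))) = _
          rw [star_add, map_add, map_add, star_add]
        map_smul' := by intro c x; exact hbsmul c x } with hblindef
    have hbapp : ∀ v, blin v = star (a (D.antipode (star v))) := fun v => rfl
    have hb1 : blin 1 = 1 := by rw [hbapp, star_one, aux_S_one D, ha1, star_one]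
    have hbprim : ∀ ξ (v : H), blin (ι ξ * v) = -(α ξ * blin v) + act (ι ξ) (blin v) := by
      intro ξ v
      rw [hbapp, hbapp, star_mul, hstar ξ, mul_neg, map_neg, hanti, hS, neg_mul, neg_neg,
        haprim, star_add, star_mul, (hα3 ξ).2, hact5, hS, star_neg, hstar ξ, neg_neg, mul_neg,
        (hα3 ξ).1 (star (a (D.antipode (star v))))]
    have cond4 : ∀ g, ((D.rep g).map fun p => a p.1 * star (a (D.antipode (star p.2)))).sum
        = D.counit g • 1 := by
      set f4 := (LinearMap.mul ℂ A).compl₁₂ a blin with hf4def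
      have key : (TensorProduct.lift f4 ∘ₗ D.comul)
          = (LinearMap.toSpanSingleton ℂ A 1 ∘ₗ D.counit) := by
        refine aux_ext ι hgen _ _ ?_ ?_
        · simp only [LinearMap.comp_apply, aux_lift_comul_one, hf4def, LinearMap.compl₁₂_apply,
            LinearMap.mul_apply', D.counit_one, LinearMap.toSpanSingleton_apply, one_smul]
          rw [ha1, hb1, one_mul]
        · intro ξ h ih
          simp only [LinearMap.comp_apply, LinearMap.toSpanSingleton_apply] at ih ⊢
          have hptw : ∀ u v : H,
              (f4 ∘ₗ LinearMap.mulLeft ℂ (ι ξ) + f4.compl₂ (LinearMap.mulLeft ℂ (ι ξ))) u v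
              = (f4.compr₂ (act (ι ξ))) u v := by
            intro u v
            simp only [LinearMap.add_apply, LinearMap.comp_apply, LinearMap.compl₂_apply,
              LinearMap.compl₁₂_apply, LinearMap.compr₂_apply, LinearMap.mulLeft_apply,
              LinearMap.mul_apply', hf4def]
            rw [haprim, hbprim, hder, add_mul, mul_add, mul_neg,
              ← mul_assoc (a u) (α ξ) (blin v), ← (hα3 ξ).1 (a u), mul_assoc]
            abel
          rw [aux_lift_prim_mul D f4 _ _ (hprim ξ), ← aux_lift_add,
            aux_lift_congr hptw (D.comul h), ← aux_lift_post, ih, map_smul, hact_one,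
            smul_zero, D.counit_mul, hcounit ξ, zero_mul, zero_smul]
      intro g
      have h2 := LinearMap.congr_fun key g
      simp only [LinearMap.comp_apply, LinearMap.toSpanSingleton_apply] at h2
      rw [aux_sum_eq_lift D f4 (fun p => a p.1 * star (a (D.antipode (star p.2))))
        (fun p => rfl) g]
      exact h2
    exact ⟨a, ⟨ha1, cond2, fun g x => cond3 g x, cond4⟩, haι⟩
  · -- PART 2 : conv restricted to primitives is addition
    intro a b ha hb ξ
    simp only [conv, LinearMap.comp_apply, hprim ξ, map_add, TensorProduct.map_tmul,
      LinearMap.mul'_apply, ha.1, hb.1, mul_one, one_mul]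
  · -- PART 3 : uniqueness
    intro a b ha hb hab
    refine aux_ext ι hgen a b ?_ ?_
    · rw [ha.1, hb.1]
    · intro ξ h ih
      rw [cocprim a ha, cocprim b hb, ih, hab ξ]
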